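/- Let P ∈ ℤ[x] be a polynomial of degree k with leading coefficient a_k. For every positive integer N and every integer i with 0 ≤ i < k, the coefficient of x^{kN − i} in P^N is divisible by a_k^{N − i}. -/
import Mathlib

open Polynomial

private lemma rev_pow (P : Polynomial ℤ) (N : ℕ) : (P ^ N).reverse = P.reverse ^ N := by
  induction N with
  | zero => simp [Polynomial.reverse, Polynomial.reflect_one]
  | succ n ih => rw [pow_succ, reverse_mul_of_domain, ih, pow_succ]

private lemma key (R : Polynomial ℤ) (N i : ℕ) :
    (R.coeff 0) ^ (N - i) ∣ (R ^ N).coeff i := by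
  rcases le_or_gt N i with h | h
  · simp [Nat.sub_eq_zero_of_le h]
  set c := R.coeff 0 with hc
  set S := R.divX with hS
  have hR : R = X * S + C c := (X_mul_divX_add R).symm
  rw [hR, add_pow, finset_sum_coeff]
  apply Finset.dvd_sum
  intro j hj
  rw [mul_pow, ← C_pow, mul_assoc, ← Polynomial.C_eq_natCast, ← C_mul, mul_assoc,
    coeff_X_pow_mul']
  split_ifs with hji
  · rw [coeff_mul_C]
    exact Dvd.dvd.mul_left
      (Dvd.dvd.mul_right (pow_dvd_pow c (Nat.sub_le_sub_left hji N)) _) _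
  · simp

theorem stmt_7 (P : Polynomial ℤ) (N : ℕ) (hN : 0 < N) (i : ℕ)
    (hi : i < P.natDegree) :
    P.leadingCoeff ^ (N - i) ∣ (P ^ N).coeff (P.natDegree * N - i) := by
  have hP0 : P ≠ 0 := fun h => by simp [h] at hi
  have hdeg : (P ^ N).natDegree = P.natDegree * N := by
    rw [natDegree_pow]; ring
  have hle : i ≤ (P ^ N).natDegree := by
    rw [hdeg]
    calc i ≤ P.natDegree := hi.le
    _ ≤ P.natDegree * N := Nat.le_mul_of_pos_right _ hN
  have := key P.reverse N i
  rw [coeff_zero_reverse, ← rev_pow, coeff_reverse, revAt_le hle, hdeg] at this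
  exact this
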